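/- For every θ ∈ ℝ, the beam splitter coefficients c_θ form a unitary (infinite) matrix: for all (k₁, k₂) and (k₁', k₂') in ℕ², the sum over all (ℓ₁, ℓ₂) ∈ ℕ² of conj(c_θ((k₁, k₂), (ℓ₁, ℓ₂))) · c_θ((k₁', k₂'), (ℓ₁, ℓ₂)) (a finite sum, since c_θ((k₁,k₂),(ℓ₁,ℓ₂)) = 0 unless ℓ₁ + ℓ₂ = k₁ + k₂) equals 1 if (k₁, k₂) = (k₁', k₂') and 0 otherwise. In particular the beam splitter operator B_θ of the many-photon semantics preserves the ℓ² inner product on the two-mode Fock space. -/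

import Mathlib

open Complex Real Finset MvPolynomial

noncomputable def bsSub (a b : ℂ) : MvPolynomial (Fin 2) ℂ →ₐ[ℂ] MvPolynomial (Fin 2) ℂ :=
  aeval ![C a * X 0 + C b * X 1, C b * X 0 + C a * X 1]

noncomputable def bsE (l : ℕ × ℕ) : Fin 2 →₀ ℕ := Finsupp.single 0 l.1 + Finsupp.single 1 l.2

noncomputable def bsA (a b : ℂ) (k l : ℕ × ℕ) : ℂ :=
  MvPolynomial.coeff (bsE l) (bsSub a b (X 0 ^ k.1 * X 1 ^ k.2))

lemma bsE_inj {l l' : ℕ × ℕ} (h : bsE l = bsE l') : l = l' := by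
  have h0 := DFunLike.congr_fun h 0
  have h1 := DFunLike.congr_fun h 1
  simp [bsE, Finsupp.single_apply] at h0 h1
  exact Prod.ext h0 h1

lemma monX (k : ℕ × ℕ) : (X 0 ^ k.1 * X 1 ^ k.2 : MvPolynomial (Fin 2) ℂ) = monomial (bsE k) 1 := by
  rw [X_pow_eq_monomial, X_pow_eq_monomial, monomial_mul, one_mul, bsE]

lemma bsSub_X0 (a b : ℂ) : bsSub a b (X 0) = C a * X 0 + C b * X 1 := by simp [bsSub]
lemma bsSub_X1 (a b : ℂ) : bsSub a b (X 1) = C b * X 0 + C a * X 1 := by simp [bsSub]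
lemma bsSub_C (a b c : ℂ) : bsSub a b (C c) = C c := by
  simp [bsSub, MvPolynomial.algebraMap_eq]

lemma term_eq (a b : ℂ) (p p2 q q2 c d : ℕ) :
    (C a * X 0)^p * (C b * X 1)^p2 * (c : MvPolynomial (Fin 2) ℂ) *
      ((C b * X 0)^q * (C a * X 1)^q2 * (d : MvPolynomial (Fin 2) ℂ))
    = C ((c : ℂ) * (d : ℂ) * (a^(p+q2) * b^(p2+q))) * (X 0 ^ (p+q) * X 1 ^ (p2+q2)) := by
  simp only [map_mul, map_pow, pow_add, ← map_natCast (C : ℂ →+* MvPolynomial (Fin 2) ℂ)]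
  ring

lemma coeff_term (a b : ℂ) (l : ℕ × ℕ) (p p2 q q2 c d : ℕ) :
    MvPolynomial.coeff (bsE l) ((C a * X 0)^p * (C b * X 1)^p2 * (c : MvPolynomial (Fin 2) ℂ) *
      ((C b * X 0)^q * (C a * X 1)^q2 * (d : MvPolynomial (Fin 2) ℂ)))
    = if (p+q, p2+q2) = l then (c : ℂ) * (d : ℂ) * (a^(p+q2) * b^(p2+q)) else 0 := by
  rw [term_eq, monX (p+q, p2+q2), coeff_C_mul, coeff_monomial]
  by_cases h : (p+q, p2+q2) = l
  · rw [if_pos h, if_pos (by rw [h]), mul_one]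
  · rw [if_neg h, if_neg (fun he => h (bsE_inj he)), mul_zero]

lemma bsA_eq (a b : ℂ) (k l : ℕ × ℕ) :
    bsA a b k l =
      if l.1 + l.2 = k.1 + k.2 then
        ∑ pq ∈ (Finset.HasAntidiagonal.antidiagonal l.1).filter (fun pq => pq.1 ≤ k.1 ∧ pq.2 ≤ k.2),
          (k.1.choose pq.1 : ℂ) * (k.2.choose pq.2 : ℂ) *
            a ^ (k.2 + pq.1 - pq.2) * b ^ (k.1 - pq.1 + pq.2)
      else 0 := by
  have expand : bsA a b k l = ∑ p ∈ Finset.range (k.1+1), ∑ q ∈ Finset.range (k.2+1),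
      (if (p+q, (k.1-p)+(k.2-q)) = l then
        (k.1.choose p : ℂ) * (k.2.choose q : ℂ) * (a^(p+(k.2-q)) * b^((k.1-p)+q)) else 0) := by
    rw [bsA, map_mul, map_pow, map_pow, bsSub_X0, bsSub_X1, add_pow, add_pow,
      Finset.sum_mul_sum, MvPolynomial.coeff_sum]
    refine Finset.sum_congr rfl fun p hp => ?_
    rw [MvPolynomial.coeff_sum]
    refine Finset.sum_congr rfl fun q hq => ?_
    exact coeff_term a b l p (k.1-p) q (k.2-q) (k.1.choose p) (k.2.choose q)
  rw [expand]
  by_cases h : l.1 + l.2 = k.1 + k.2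
  · rw [if_pos h, ← Finset.sum_product']
    have hset : ((Finset.range (k.1+1)) ×ˢ (Finset.range (k.2+1))).filter
        (fun pq => (pq.1 + pq.2, (k.1 - pq.1) + (k.2 - pq.2)) = l)
        = (Finset.HasAntidiagonal.antidiagonal l.1).filter (fun pq => pq.1 ≤ k.1 ∧ pq.2 ≤ k.2) := by
      ext pq
      simp only [Finset.mem_filter, Finset.mem_product, Finset.mem_range,
        Finset.HasAntidiagonal.mem_antidiagonal, Prod.ext_iff]
      constructor
      · rintro ⟨⟨h1, h2⟩, h3, h4⟩
        exact ⟨h3, by omega, by omega⟩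
      · rintro ⟨h1, h2, h3⟩
        exact ⟨⟨by omega, by omega⟩, by omega, by omega⟩
    rw [← Finset.sum_filter, hset]
    refine Finset.sum_congr rfl fun pq hpq => ?_
    simp only [Finset.mem_filter, Finset.HasAntidiagonal.mem_antidiagonal] at hpq
    obtain ⟨h1, h2, h3⟩ := hpq
    have e1 : pq.1 + (k.2 - pq.2) = k.2 + pq.1 - pq.2 := by omega
    have e2 : (k.1 - pq.1) + pq.2 = k.1 - pq.1 + pq.2 := by omega
    rw [e1, e2]; ring
  · rw [if_neg h]
    refine Finset.sum_eq_zero fun p hp => Finset.sum_eq_zero fun q hq => ?_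
    simp only [Finset.mem_range] at hp hq
    rw [if_neg]
    intro he
    rw [Prod.ext_iff] at he
    omega

lemma bsA_vanish (a b : ℂ) {k l : ℕ × ℕ} (h : ¬ l.1 + l.2 = k.1 + k.2) : bsA a b k l = 0 := by
  rw [bsA_eq, if_neg h]

lemma bsSub_comp (a b a' b' : ℂ) (p : MvPolynomial (Fin 2) ℂ) :
    bsSub a b (bsSub a' b' p) = bsSub (a*a'+b*b') (a*b'+b*a') p := by
  have h : (bsSub a b).comp (bsSub a' b') = bsSub (a*a'+b*b') (a*b'+b*a') := by
    have h0 : bsSub a b (bsSub a' b' (X (0 : Fin 2))) = bsSub (a*a'+b*b') (a*b'+b*a') (X 0) := by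
      rw [bsSub_X0, map_add, map_mul, map_mul, bsSub_C, bsSub_C, bsSub_X0, bsSub_X1, bsSub_X0,
        map_add, map_mul, map_mul]
      simp only [map_add, map_mul]
      ring
    have h1 : bsSub a b (bsSub a' b' (X (1 : Fin 2))) = bsSub (a*a'+b*b') (a*b'+b*a') (X 1) := by
      rw [bsSub_X1, map_add, map_mul, map_mul, bsSub_C, bsSub_C, bsSub_X0, bsSub_X1, bsSub_X1,
        map_add, map_mul, map_mul]
      simp only [map_add, map_mul]
      ring
    apply MvPolynomial.algHom_ext
    intro i
    fin_cases i
    · exact h0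
    · exact h1
  exact DFunLike.congr_fun h p

lemma bsA_delta (k l : ℕ × ℕ) : bsA 1 0 k l = if k = l then 1 else 0 := by
  rw [bsA, map_mul, map_pow, map_pow, bsSub_X0, bsSub_X1]
  simp only [map_one, map_zero, one_mul, zero_mul, add_zero, zero_add]
  rw [monX k, MvPolynomial.coeff_monomial]
  by_cases h : k = l
  · rw [if_pos (by rw [h]), if_pos h]
  · rw [if_neg (fun he => h (bsE_inj he)), if_neg h]

lemma bsE_surj (d : Fin 2 →₀ ℕ) : d = bsE (d 0, d 1) := by
  ext i
  fin_cases i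
  · simp [bsE, Finsupp.single_apply]
  · simp [bsE, Finsupp.single_apply]

lemma bsSub_monX (a b : ℂ) (k : ℕ × ℕ) :
    bsSub a b (X 0 ^ k.1 * X 1 ^ k.2) =
      ∑ l ∈ Finset.HasAntidiagonal.antidiagonal (k.1 + k.2), C (bsA a b k l) * (X 0 ^ l.1 * X 1 ^ l.2) := by
  apply MvPolynomial.ext
  intro d
  obtain ⟨l0, hd⟩ : ∃ l0, d = bsE l0 := ⟨(d 0, d 1), bsE_surj d⟩
  subst hd
  rw [MvPolynomial.coeff_sum]
  have hL : MvPolynomial.coeff (bsE l0) (bsSub a b (X 0 ^ k.1 * X 1 ^ k.2)) = bsA a b k l0 := rfl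
  rw [hL]
  have hR : ∀ l ∈ Finset.HasAntidiagonal.antidiagonal (k.1 + k.2),
      MvPolynomial.coeff (bsE l0) (C (bsA a b k l) * (X 0 ^ l.1 * X 1 ^ l.2))
        = if l = l0 then bsA a b k l else 0 := by
    intro l hl
    rw [coeff_C_mul, monX l, coeff_monomial]
    by_cases h : l = l0
    · rw [if_pos (by rw [h]), if_pos h, mul_one]
    · rw [if_neg (fun he => h (bsE_inj he)), if_neg h, mul_zero]
  rw [Finset.sum_congr rfl hR, Finset.sum_ite_eq' (Finset.HasAntidiagonal.antidiagonal (k.1+k.2)) l0]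
  by_cases hmem : l0 ∈ Finset.HasAntidiagonal.antidiagonal (k.1 + k.2)
  · rw [if_pos hmem]
  · rw [if_neg hmem]
    exact bsA_vanish a b (by simpa [Finset.HasAntidiagonal.mem_antidiagonal] using hmem)

lemma bsA_mul (a b a' b' : ℂ) (k m : ℕ × ℕ) :
    bsA (a*a'+b*b') (a*b'+b*a') k m =
      ∑ l ∈ Finset.HasAntidiagonal.antidiagonal (k.1 + k.2), bsA a' b' k l * bsA a b l m := by
  have h1 : bsA (a*a'+b*b') (a*b'+b*a') k m
      = MvPolynomial.coeff (bsE m) (bsSub a b (bsSub a' b' (X 0 ^ k.1 * X 1 ^ k.2))) := by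
    rw [bsSub_comp]; rfl
  rw [h1, bsSub_monX, map_sum, MvPolynomial.coeff_sum]
  refine Finset.sum_congr rfl fun l hl => ?_
  rw [map_mul, bsSub_C, MvPolynomial.coeff_C_mul]
  rfl

lemma bsA_conj (a b : ℂ) (k l : ℕ × ℕ) :
    (starRingEnd ℂ) (bsA a b k l) = bsA ((starRingEnd ℂ) a) ((starRingEnd ℂ) b) k l := by
  rw [bsA_eq, bsA_eq]
  split_ifs with h
  · rw [map_sum]
    refine Finset.sum_congr rfl fun pq hpq => ?_
    simp only [map_mul, map_pow, map_natCast]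
  · exact map_zero _

noncomputable def sqf (k l : ℕ × ℕ) : ℝ :=
  Real.sqrt ((l.1.factorial * l.2.factorial : ℕ) / ((k.1.factorial * k.2.factorial : ℕ) : ℝ))

lemma natkey {k1 k2 l1 l2 p q : ℕ} (hp : p ≤ k1) (hq : q ≤ k2) (hpq : p + q = l1)
    (h : l1 + l2 = k1 + k2) :
    l1.factorial * l2.factorial * (k1.choose p * k2.choose q)
      = k1.factorial * k2.factorial * (l1.choose p * l2.choose (k1 - p)) := by
  have e1 : l1 - p = q := by omega
  have e2 : l2 - (k1 - p) = k2 - q := by omega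
  rw [← Nat.choose_mul_factorial_mul_factorial (show p ≤ l1 by omega),
      ← Nat.choose_mul_factorial_mul_factorial (show k1 - p ≤ l2 by omega),
      ← Nat.choose_mul_factorial_mul_factorial hp,
      ← Nat.choose_mul_factorial_mul_factorial hq, e1, e2]
  ring

lemma sq_coeff {k1 k2 l1 l2 p q : ℕ} (hp : p ≤ k1) (hq : q ≤ k2) (hpq : p + q = l1)
    (h : l1 + l2 = k1 + k2) :
    sqf (k1,k2) (l1,l2) * ((k1.choose p : ℝ) * (k2.choose q : ℝ))
      = sqf (l1,l2) (k1,k2) * ((l1.choose p : ℝ) * (l2.choose (k1-p) : ℝ)) := by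
  have hA : (0:ℝ) < ((l1.factorial * l2.factorial : ℕ) : ℝ) := by
    exact_mod_cast Nat.pos_of_ne_zero (by positivity)
  have hB : (0:ℝ) < ((k1.factorial * k2.factorial : ℕ) : ℝ) := by
    exact_mod_cast Nat.pos_of_ne_zero (by positivity)
  have key : ((l1.factorial * l2.factorial : ℕ) : ℝ) * ((k1.choose p : ℝ) * (k2.choose q : ℝ))
      = ((k1.factorial * k2.factorial : ℕ) : ℝ) *
        ((l1.choose p : ℝ) * (l2.choose (k1-p) : ℝ)) := by
    exact_mod_cast congrArg (Nat.cast : ℕ → ℝ) (natkey hp hq hpq h)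
  have sA := Real.sqrt_pos.2 hA
  have sB := Real.sqrt_pos.2 hB
  have mA := Real.mul_self_sqrt hA.le
  have mB := Real.mul_self_sqrt hB.le
  rw [sqf, sqf, Real.sqrt_div (by positivity), Real.sqrt_div (by positivity),
    div_mul_eq_mul_div, div_mul_eq_mul_div, div_eq_div_iff sB.ne' sA.ne']
  linear_combination ((k1.choose p : ℝ) * (k2.choose q : ℝ)) * mA
    - ((l1.choose p : ℝ) * (l2.choose (k1-p) : ℝ)) * mB + key

lemma bs_symm (a b : ℂ) (k l : ℕ × ℕ) :
    (sqf k l : ℂ) * bsA a b k l = (sqf l k : ℂ) * bsA a b l k := by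
  by_cases h : l.1 + l.2 = k.1 + k.2
  · rw [bsA_eq, bsA_eq, if_pos h, if_pos h.symm, Finset.mul_sum, Finset.mul_sum]
    refine Finset.sum_nbij' (fun pq => (pq.1, k.1 - pq.1)) (fun pq => (pq.1, l.1 - pq.1))
      ?_ ?_ ?_ ?_ ?_
    · intro pq hpq
      simp only [Finset.mem_filter, Finset.HasAntidiagonal.mem_antidiagonal] at hpq ⊢
      omega
    · intro pq hpq
      simp only [Finset.mem_filter, Finset.HasAntidiagonal.mem_antidiagonal] at hpq ⊢
      omega
    · intro pq hpq
      simp only [Finset.mem_filter, Finset.HasAntidiagonal.mem_antidiagonal] at hpq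
      exact Prod.ext rfl (show l.1 - pq.1 = pq.2 by omega)
    · intro pq hpq
      simp only [Finset.mem_filter, Finset.HasAntidiagonal.mem_antidiagonal] at hpq
      exact Prod.ext rfl (show k.1 - pq.1 = pq.2 by omega)
    · intro pq hpq
      simp only [Finset.mem_filter, Finset.HasAntidiagonal.mem_antidiagonal] at hpq
      obtain ⟨h1, h2, h3⟩ := hpq
      have ec : (sqf k l : ℂ) * ((k.1.choose pq.1 : ℂ) * (k.2.choose pq.2 : ℂ))
          = (sqf l k : ℂ) * ((l.1.choose pq.1 : ℂ) * (l.2.choose (k.1 - pq.1) : ℂ)) := by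
        have := sq_coeff (k1 := k.1) (k2 := k.2) (l1 := l.1) (l2 := l.2) h2 h3 h1 h
        have := congrArg (Complex.ofReal) this
        push_cast at this ⊢
        convert this using 2 <;> norm_num
      have ea : k.2 + pq.1 - pq.2 = l.2 + pq.1 - (k.1 - pq.1) := by omega
      have eb : k.1 - pq.1 + pq.2 = l.1 - pq.1 + (k.1 - pq.1) := by omega
      calc (sqf k l : ℂ) * ((k.1.choose pq.1 : ℂ) * (k.2.choose pq.2 : ℂ)
              * a ^ (k.2 + pq.1 - pq.2) * b ^ (k.1 - pq.1 + pq.2))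
          = ((sqf k l : ℂ) * ((k.1.choose pq.1 : ℂ) * (k.2.choose pq.2 : ℂ)))
              * a ^ (k.2 + pq.1 - pq.2) * b ^ (k.1 - pq.1 + pq.2) := by ring
        _ = ((sqf l k : ℂ) * ((l.1.choose pq.1 : ℂ) * (l.2.choose (k.1 - pq.1) : ℂ)))
              * a ^ (l.2 + pq.1 - (k.1 - pq.1)) * b ^ (l.1 - pq.1 + (k.1 - pq.1)) := by
            rw [ec, ea, eb]
        _ = (sqf l k : ℂ) * ((l.1.choose pq.1 : ℂ) * (l.2.choose (k.1 - pq.1) : ℂ)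
              * a ^ (l.2 + pq.1 - (k.1 - pq.1)) * b ^ (l.1 - pq.1 + (k.1 - pq.1))) := by ring
  · rw [bsA_vanish a b h, bsA_vanish a b (fun hh => h hh.symm), mul_zero, mul_zero]

lemma sqf_comp (k l m : ℕ × ℕ) : sqf k l * sqf l m = sqf k m := by
  have hK : ((k.1.factorial * k.2.factorial : ℕ) : ℝ) ≠ 0 := by positivity
  have hL : ((l.1.factorial * l.2.factorial : ℕ) : ℝ) ≠ 0 := by positivity
  rw [sqf, sqf, sqf, ← Real.sqrt_mul (by positivity)]
  congr 1
  field_simp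

lemma sqf_self (k : ℕ × ℕ) : sqf k k = 1 := by
  have hK : ((k.1.factorial * k.2.factorial : ℕ) : ℝ) ≠ 0 := by positivity
  rw [sqf, div_self hK, Real.sqrt_one]

noncomputable def bsCoeff (θ : ℝ) (k ℓ : ℕ × ℕ) : ℂ :=
  if ℓ.1 + ℓ.2 = k.1 + k.2 then
    (Real.sqrt ((ℓ.1.factorial * ℓ.2.factorial : ℕ) /
        ((k.1.factorial * k.2.factorial : ℕ) : ℝ)) : ℂ) *
      ∑ pq ∈ (Finset.HasAntidiagonal.antidiagonal ℓ.1).filter (fun pq => pq.1 ≤ k.1 ∧ pq.2 ≤ k.2),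
        (k.1.choose pq.1 : ℂ) * (k.2.choose pq.2 : ℂ) *
          (Real.cos θ : ℂ) ^ (k.2 + pq.1 - pq.2) *
          (Complex.I * Real.sin θ) ^ (k.1 - pq.1 + pq.2)
  else 0

lemma bsCoeff_eq (θ : ℝ) (k l : ℕ × ℕ) :
    bsCoeff θ k l = (sqf k l : ℂ) *
      bsA ((Real.cos θ : ℝ) : ℂ) (Complex.I * (Real.sin θ : ℝ)) k l := by
  rw [bsCoeff, bsA_eq, sqf]
  split_ifs with h
  · rfl
  · rw [mul_zero]

theorem bsCoeff_unitary (θ : ℝ) (k k' : ℕ × ℕ) :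
    ∑' ℓ : ℕ × ℕ, (starRingEnd ℂ) (bsCoeff θ k ℓ) * bsCoeff θ k' ℓ =
      if k = k' then 1 else 0 := by
  have hcb : (starRingEnd ℂ) (Complex.I * ((Real.sin θ : ℝ) : ℂ))
      = -(Complex.I * ((Real.sin θ : ℝ) : ℂ)) := by
    rw [map_mul, Complex.conj_I, Complex.conj_ofReal]
    ring
  have hconj : ∀ l : ℕ × ℕ, (starRingEnd ℂ) (bsCoeff θ k l)
      = (sqf k l : ℂ) * bsA ((Real.cos θ : ℝ) : ℂ) (-(Complex.I * ((Real.sin θ : ℝ) : ℂ))) k l := by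
    intro l
    rw [bsCoeff_eq, map_mul, bsA_conj, Complex.conj_ofReal, Complex.conj_ofReal, hcb]
  have hzero : ∀ l : ℕ × ℕ, l ∉ Finset.HasAntidiagonal.antidiagonal (k.1 + k.2) →
      (starRingEnd ℂ) (bsCoeff θ k l) * bsCoeff θ k' l = 0 := by
    intro l hl
    rw [Finset.HasAntidiagonal.mem_antidiagonal] at hl
    rw [bsCoeff, if_neg hl, map_zero, zero_mul]
  rw [tsum_eq_sum hzero]
  have step1 : ∀ l ∈ Finset.HasAntidiagonal.antidiagonal (k.1 + k.2),
      (starRingEnd ℂ) (bsCoeff θ k l) * bsCoeff θ k' l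
        = (sqf k k' : ℂ) * (bsA ((Real.cos θ : ℝ) : ℂ) (-(Complex.I * ((Real.sin θ : ℝ) : ℂ))) k l
            * bsA ((Real.cos θ : ℝ) : ℂ) (Complex.I * ((Real.sin θ : ℝ) : ℂ)) l k') := by
    intro l hl
    rw [hconj, bsCoeff_eq,
      bs_symm ((Real.cos θ : ℝ) : ℂ) (Complex.I * ((Real.sin θ : ℝ) : ℂ)) k' l]
    have hsq : (sqf k l : ℂ) * (sqf l k' : ℂ) = (sqf k k' : ℂ) := by
      rw [← Complex.ofReal_mul, sqf_comp]
    calc (sqf k l : ℂ) * bsA ((Real.cos θ : ℝ) : ℂ) (-(Complex.I * ((Real.sin θ : ℝ) : ℂ))) k l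
          * ((sqf l k' : ℂ) * bsA ((Real.cos θ : ℝ) : ℂ) (Complex.I * ((Real.sin θ : ℝ) : ℂ)) l k')
        = (sqf k l : ℂ) * (sqf l k' : ℂ)
            * (bsA ((Real.cos θ : ℝ) : ℂ) (-(Complex.I * ((Real.sin θ : ℝ) : ℂ))) k l
              * bsA ((Real.cos θ : ℝ) : ℂ) (Complex.I * ((Real.sin θ : ℝ) : ℂ)) l k') := by ring
      _ = (sqf k k' : ℂ) * _ := by rw [hsq]
  rw [Finset.sum_congr rfl step1, ← Finset.mul_sum,
    ← bsA_mul ((Real.cos θ : ℝ) : ℂ) (Complex.I * ((Real.sin θ : ℝ) : ℂ))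
      ((Real.cos θ : ℝ) : ℂ) (-(Complex.I * ((Real.sin θ : ℝ) : ℂ))) k k']
  have hs : ((Real.sin θ : ℝ) : ℂ)^2 + ((Real.cos θ : ℝ) : ℂ)^2 = 1 := by
    rw [← Complex.ofReal_pow, ← Complex.ofReal_pow, ← Complex.ofReal_add,
      Real.sin_sq_add_cos_sq, Complex.ofReal_one]
  have h1 : ((Real.cos θ : ℝ) : ℂ) * ((Real.cos θ : ℝ) : ℂ)
      + (Complex.I * ((Real.sin θ : ℝ) : ℂ)) * (-(Complex.I * ((Real.sin θ : ℝ) : ℂ))) = 1 := by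
    linear_combination hs - ((Real.sin θ : ℝ) : ℂ)^2 * Complex.I_sq
  have h2 : ((Real.cos θ : ℝ) : ℂ) * (-(Complex.I * ((Real.sin θ : ℝ) : ℂ)))
      + (Complex.I * ((Real.sin θ : ℝ) : ℂ)) * ((Real.cos θ : ℝ) : ℂ) = 0 := by ring
  rw [h1, h2, bsA_delta]
  split_ifs with h
  · subst h
    rw [sqf_self]
    norm_num
  · rw [mul_zero]
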